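/- In the two-point counterexample, the stationary conditions of the population binary NCE objective force θ_1 = (1/4)e^γ and θ_2 = (7/12)e^γ, so any maximizer yields the estimated conditional ratio p̂(y_1|x_1)/p̂(y_2|x_1) = 3/7, which differs from the true ratio p(y_1|x_1)/p(y_2|x_1) = 1/3; hence binary NCE is inconsistent when the partition function depends on x. -/

import Mathlib

lemma nce_aux (p q u v : ℝ) (hp : 0 < p) (hq : 0 < q) (hu0 : 0 < u) (hu1 : u < 1)
    (hv : v = p / (p + q)) (hne : u ≠ v) :
    p * Real.log u + q * Real.log (1 - u) < p * Real.log v + q * Real.log (1 - v) := by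
  have hpq : 0 < p + q := by linarith
  have hv0 : 0 < v := by rw [hv]; positivity
  have hv1 : v < 1 := by rw [hv, div_lt_one hpq]; linarith
  have h1u : 0 < 1 - u := by linarith
  have h1v : 0 < 1 - v := by linarith
  have e1 : p * (u / v) = (p + q) * u := by
    rw [hv]; field_simp
  have e3 : q * ((1 - u) / (1 - v)) = (p + q) * (1 - u) := by
    have e2 : 1 - v = q / (p + q) := by rw [hv]; field_simp; ring
    rw [e2]; field_simp
  have l1 : Real.log (u / v) < u / v - 1 := by
    apply Real.log_lt_sub_one_of_pos (by positivity)
    intro h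
    exact hne ((div_eq_one_iff_eq (ne_of_gt hv0)).mp h)
  have l2 : Real.log ((1 - u) / (1 - v)) ≤ (1 - u) / (1 - v) - 1 :=
    Real.log_le_sub_one_of_pos (by positivity)
  rw [Real.log_div (ne_of_gt hu0) (ne_of_gt hv0)] at l1
  rw [Real.log_div (ne_of_gt h1u) (ne_of_gt h1v)] at l2
  nlinarith [mul_lt_mul_of_pos_left l1 hp, mul_le_mul_of_nonneg_left l2 hq.le]

theorem binary_nce_counterexample (K : ℕ) (hK : 1 ≤ K)
    (L : ℝ → ℝ → ℝ → ℝ)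
    (hL : ∀ θ₁ θ₂ γ, L θ₁ θ₂ γ =
      (1 / 8) * Real.log (2 * θ₁ / (2 * θ₁ + K * Real.exp γ))
      + ((K : ℝ) / 4) * Real.log (K * Real.exp γ / (2 * θ₁ + K * Real.exp γ))
      + (7 / 8) * Real.log (2 * θ₂ / (2 * θ₂ + K * Real.exp γ))
      + (3 * (K : ℝ) / 4) * Real.log (K * Real.exp γ / (2 * θ₂ + K * Real.exp γ)))
    (θ₁ θ₂ γ : ℝ) (hθ₁ : 0 < θ₁) (hθ₂ : 0 < θ₂)
    (hmax : ∀ t₁ t₂ g, 0 < t₁ → 0 < t₂ → L t₁ t₂ g ≤ L θ₁ θ₂ γ) :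
    θ₁ = Real.exp γ / 4 ∧ θ₂ = 7 * Real.exp γ / 12 ∧
    θ₁ / θ₂ = 3 / 7 ∧ (3 : ℝ) / 7 ≠ 1 / 3 := by
  have hexp : 0 < Real.exp γ := Real.exp_pos γ
  have hKpos : (0:ℝ) < (K:ℝ) := by exact_mod_cast Nat.lt_of_lt_of_le Nat.zero_lt_one hK
  have hc : 0 < (K:ℝ) * Real.exp γ := by positivity
  set c := (K:ℝ) * Real.exp γ with hcdef
  -- first coordinate
  have h1 : θ₁ = Real.exp γ / 4 := by
    by_contra hne
    have hm := hmax (Real.exp γ / 4) θ₂ γ (by positivity) hθ₂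
    rw [hL, hL] at hm
    set u := 2 * θ₁ / (2 * θ₁ + c) with hu
    set v := 2 * (Real.exp γ / 4) / (2 * (Real.exp γ / 4) + c) with hv
    have hd1 : 0 < 2 * θ₁ + c := by positivity
    have hd2 : 0 < 2 * (Real.exp γ / 4) + c := by positivity
    have e4 : c / (2 * θ₁ + c) = 1 - u := by rw [hu]; field_simp; ring
    have e5 : c / (2 * (Real.exp γ / 4) + c) = 1 - v := by rw [hv]; field_simp; ring
    rw [e4, e5] at hm
    have hu0 : 0 < u := by rw [hu]; positivity
    have hu1 : u < 1 := by rw [hu, div_lt_one hd1]; linarith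
    have hveq : v = (1/8) / ((1/8) + (K:ℝ)/4) := by
      rw [hv, hcdef]; field_simp; ring
    have huv : u ≠ v := by
      intro h
      apply hne
      rw [hu, hv, div_eq_div_iff hd1.ne' hd2.ne'] at h
      have h' : θ₁ * c = (Real.exp γ / 4) * c := by linear_combination h / 2
      exact mul_right_cancel₀ hc.ne' h'
    have key := nce_aux (1/8) ((K:ℝ)/4) u v (by norm_num) (by positivity) hu0 hu1 hveq huv
    linarith
  -- second coordinate
  have h2 : θ₂ = 7 * Real.exp γ / 12 := by
    by_contra hne
    have hm := hmax θ₁ (7 * Real.exp γ / 12) γ hθ₁ (by positivity)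
    rw [hL, hL] at hm
    set u := 2 * θ₂ / (2 * θ₂ + c) with hu
    set v := 2 * (7 * Real.exp γ / 12) / (2 * (7 * Real.exp γ / 12) + c) with hv
    have hd1 : 0 < 2 * θ₂ + c := by positivity
    have hd2 : 0 < 2 * (7 * Real.exp γ / 12) + c := by positivity
    have e4 : c / (2 * θ₂ + c) = 1 - u := by rw [hu]; field_simp; ring
    have e5 : c / (2 * (7 * Real.exp γ / 12) + c) = 1 - v := by rw [hv]; field_simp; ring
    rw [e4, e5] at hm
    have hu0 : 0 < u := by rw [hu]; positivity
    have hu1 : u < 1 := by rw [hu, div_lt_one hd1]; linarith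
    have hveq : v = (7/8) / ((7/8) + 3*(K:ℝ)/4) := by
      rw [hv, hcdef]; field_simp; ring
    have huv : u ≠ v := by
      intro h
      apply hne
      rw [hu, hv, div_eq_div_iff hd1.ne' hd2.ne'] at h
      have h' : θ₂ * c = (7 * Real.exp γ / 12) * c := by linear_combination h / 2
      exact mul_right_cancel₀ hc.ne' h'
    have key := nce_aux (7/8) (3*(K:ℝ)/4) u v (by norm_num) (by positivity) hu0 hu1 hveq huv
    linarith
  refine ⟨h1, h2, ?_, by norm_num⟩
  rw [h1, h2]
  field_simp
  ring
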